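/- In the graph G(x,ε), the subgraph H whose edge set consists of all edges of the path π together with the edge (x_n, y_1) is a (1+ε)-spanner of G(x,ε) of total weight strictly less than 4. Consequently, the minimum total weight of a (1+ε)-spanner of G(x,ε) is strictly less than 4. -/

import Mathlib

open scoped BigOperators

namespace Paper

variable {V : Type*}

/-- The weight of a walk: the sum of its edge weights, with multiplicity. -/
noncomputable def wWalk (w : V → V → ℝ) {G : SimpleGraph V} {u v : V} (p : G.Walk u v) : ℝ :=
  (p.darts.map fun d => w d.toProd.1 d.toProd.2).sum

/-- The distance between two vertices: the infimum of the weights of walks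
between them, `⊤` if there is none. -/
noncomputable def gdist (G : SimpleGraph V) (w : V → V → ℝ) (u v : V) : EReal :=
  ⨅ p : G.Walk u v, (wWalk w p : EReal)

/-- `H` is a `t`-spanner of `G` with respect to the weights `w`. -/
def IsSpanner (G : SimpleGraph V) (w : V → V → ℝ) (H : SimpleGraph V) (t : ℝ) : Prop :=
  H ≤ G ∧ ∀ u v : V, gdist H w u v ≤ (t : EReal) * gdist G w u v

/-- The total weight of the edges of a graph. -/
noncomputable def wGraph (G : SimpleGraph V) (w : V → V → ℝ)
    (hw : ∀ a b, w a b = w b a) : ℝ :=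
  ∑ᶠ e ∈ G.edgeSet, Sym2.lift ⟨w, hw⟩ e

/-- Vertices of the hard instance `G(x,ε)`: `Sum.inl ()` is `z`,
`Sum.inr (Sum.inl i)` is `x_{i+1}`, and `Sum.inr (Sum.inr i)` is `y_{i+1}`. -/
abbrev GrV (n : ℕ) := Unit ⊕ Fin n ⊕ Fin n

/-- The weight `W₀ = 1 + ε - (n-1)xε` of the edge `(x_n, y_1)`. -/
noncomputable def W0 (n : ℕ) (x ε : ℝ) : ℝ := 1 + ε - ((n : ℝ) - 1) * (x * ε)

/-- Base relation of `G(x,ε)`: rungs `(x_i, y_i)`, path edges `(x_i, x_{i+1})`,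
`(y_i, y_{i+1})`, the edge `(x_n, y_1)`, and the edges `(x_n, z)`, `(z, y_1)`. -/
def grRel (n : ℕ) : GrV n → GrV n → Prop
  | Sum.inr (Sum.inl i), Sum.inr (Sum.inr j) => i = j ∨ (i.val = n - 1 ∧ j.val = 0)
  | Sum.inr (Sum.inl i), Sum.inr (Sum.inl j) => j.val = i.val + 1
  | Sum.inr (Sum.inr i), Sum.inr (Sum.inr j) => j.val = i.val + 1
  | Sum.inl _, Sum.inr (Sum.inl i) => i.val = n - 1
  | Sum.inl _, Sum.inr (Sum.inr j) => j.val = 0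
  | _, _ => False

/-- The hard instance `G(x,ε)` for the greedy algorithm. -/
def grG (n : ℕ) : SimpleGraph (GrV n) := SimpleGraph.fromRel (grRel n)

/-- The edge weights of `G(x,ε)`. -/
noncomputable def grW (n : ℕ) (x ε : ℝ) : GrV n → GrV n → ℝ
  | Sum.inr (Sum.inl i), Sum.inr (Sum.inr j) => if i = j then 1 else W0 n x ε
  | Sum.inr (Sum.inr j), Sum.inr (Sum.inl i) => if i = j then 1 else W0 n x ε
  | Sum.inl _, _ => (1 + x * ε) * W0 n x ε / 2
  | _, Sum.inl _ => (1 + x * ε) * W0 n x ε / 2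
  | _, _ => x * ε

lemma grW_symm (n : ℕ) (x ε : ℝ) : ∀ a b : GrV n, grW n x ε a b = grW n x ε b a := by
  rintro (⟨⟩ | a | a) (⟨⟩ | b | b) <;> rfl

/-- Base relation of the subgraph `H`: all edges of the path `π` together
with the edge `(x_n, y_1)`. -/
def hRel2 (n : ℕ) : GrV n → GrV n → Prop
  | Sum.inr (Sum.inl i), Sum.inr (Sum.inr j) => i.val = n - 1 ∧ j.val = 0
  | Sum.inr (Sum.inl i), Sum.inr (Sum.inl j) => j.val = i.val + 1
  | Sum.inr (Sum.inr i), Sum.inr (Sum.inr j) => j.val = i.val + 1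
  | Sum.inl _, Sum.inr (Sum.inl i) => i.val = n - 1
  | Sum.inl _, Sum.inr (Sum.inr j) => j.val = 0
  | _, _ => False

open Fin.NatCast

section Aux

open SimpleGraph

lemma wWalk_nil {w : V → V → ℝ} {G : SimpleGraph V} {u : V} :
    wWalk w (Walk.nil : G.Walk u u) = 0 := rfl

lemma wWalk_cons {w : V → V → ℝ} {G : SimpleGraph V} {u v t : V} (h : G.Adj u v)
    (p : G.Walk v t) : wWalk w (Walk.cons h p) = w u v + wWalk w p := by
  simp [wWalk]

lemma wWalk_append {w : V → V → ℝ} {G : SimpleGraph V} {u v t : V} (p : G.Walk u v)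
    (q : G.Walk v t) : wWalk w (p.append q) = wWalk w p + wWalk w q := by
  simp [wWalk, Walk.darts_append]

lemma wWalk_concat {w : V → V → ℝ} {G : SimpleGraph V} {u v t : V} (p : G.Walk u v)
    (h : G.Adj v t) : wWalk w (p.concat h) = wWalk w p + w v t := by
  simp [wWalk, Walk.darts_concat]

lemma wWalk_copy {w : V → V → ℝ} {G : SimpleGraph V} {u v u' v' : V} (p : G.Walk u v)
    (hu : u = u') (hv : v = v') : wWalk w (p.copy hu hv) = wWalk w p := by
  simp [wWalk, Walk.darts_copy]

lemma wWalk_reverse {w : V → V → ℝ} (hw : ∀ a b, w a b = w b a) {G : SimpleGraph V}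
    {u v : V} (p : G.Walk u v) : wWalk w p.reverse = wWalk w p := by
  simp only [wWalk, Walk.darts_reverse, List.map_reverse, List.sum_reverse, List.map_map]
  refine congrArg List.sum (List.map_congr_left fun d _ => ?_)
  exact hw _ _

lemma wWalk_nonneg {w : V → V → ℝ} (hw : ∀ a b, 0 ≤ w a b) {G : SimpleGraph V}
    {u v : V} (p : G.Walk u v) : 0 ≤ wWalk w p := by
  apply List.sum_nonneg
  intro a ha
  obtain ⟨d, _, rfl⟩ := List.mem_map.1 ha
  exact hw _ _

/-- `z` as a vertex. -/
def Zv (n : ℕ) : GrV n := Sum.inl ()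

/-- `x_{i+1}` as a vertex, for a natural number index. -/
def Xv (n : ℕ) [NeZero n] (i : ℕ) : GrV n := Sum.inr (Sum.inl (i : Fin n))

/-- `y_{i+1}` as a vertex, for a natural number index. -/
def Yv (n : ℕ) [NeZero n] (i : ℕ) : GrV n := Sum.inr (Sum.inr (i : Fin n))

variable {n : ℕ} [NeZero n]

lemma eqX {i : Fin n} {m : ℕ} (h : i.val = m) : (Sum.inr (Sum.inl i) : GrV n) = Xv n m := by
  subst h; rw [Xv, Fin.cast_val_eq_self]

lemma eqY {i : Fin n} {m : ℕ} (h : i.val = m) : (Sum.inr (Sum.inr i) : GrV n) = Yv n m := by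
  subst h; rw [Yv, Fin.cast_val_eq_self]

lemma Xv_inj {i j : ℕ} (hi : i < n) (hj : j < n) (h : Xv n i = Xv n j) : i = j := by
  rw [Xv, Xv] at h
  have h2 : ((i : ℕ) : Fin n) = ((j : ℕ) : Fin n) := by
    simpa using h
  have h3 := congrArg Fin.val h2
  rwa [Fin.val_cast_of_lt hi, Fin.val_cast_of_lt hj] at h3

lemma Yv_inj {i j : ℕ} (hi : i < n) (hj : j < n) (h : Yv n i = Yv n j) : i = j := by
  rw [Yv, Yv] at h
  have h2 : ((i : ℕ) : Fin n) = ((j : ℕ) : Fin n) := by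
    simpa using h
  have h3 := congrArg Fin.val h2
  rwa [Fin.val_cast_of_lt hi, Fin.val_cast_of_lt hj] at h3

lemma adjXX {i : ℕ} (h : i + 1 < n) :
    (SimpleGraph.fromRel (hRel2 n)).Adj (Xv n i) (Xv n (i + 1)) := by
  refine ⟨fun hEq => ?_, Or.inl ?_⟩
  · exact absurd (Xv_inj (by omega) h hEq) (by omega)
  · show ((i + 1 : ℕ) : Fin n).val = ((i : ℕ) : Fin n).val + 1
    rw [Fin.val_cast_of_lt h, Fin.val_cast_of_lt (by omega)]

lemma adjYY {i : ℕ} (h : i + 1 < n) :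
    (SimpleGraph.fromRel (hRel2 n)).Adj (Yv n i) (Yv n (i + 1)) := by
  refine ⟨fun hEq => ?_, Or.inl ?_⟩
  · exact absurd (Yv_inj (by omega) h hEq) (by omega)
  · show ((i + 1 : ℕ) : Fin n).val = ((i : ℕ) : Fin n).val + 1
    rw [Fin.val_cast_of_lt h, Fin.val_cast_of_lt (by omega)]

lemma adjXY : (SimpleGraph.fromRel (hRel2 n)).Adj (Xv n (n - 1)) (Yv n 0) := by
  refine ⟨by simp [Xv, Yv], Or.inl ?_⟩
  show (((n - 1 : ℕ)) : Fin n).val = n - 1 ∧ ((0 : ℕ) : Fin n).val = 0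
  have h0 : 0 < n := Nat.pos_of_ne_zero (NeZero.ne n)
  exact ⟨Fin.val_cast_of_lt (by omega), by simp⟩

lemma adjZX : (SimpleGraph.fromRel (hRel2 n)).Adj (Zv n) (Xv n (n - 1)) := by
  refine ⟨by simp [Zv, Xv], Or.inl ?_⟩
  show (((n - 1 : ℕ)) : Fin n).val = n - 1
  have h0 : 0 < n := Nat.pos_of_ne_zero (NeZero.ne n)
  exact Fin.val_cast_of_lt (by omega)

lemma adjZY : (SimpleGraph.fromRel (hRel2 n)).Adj (Zv n) (Yv n 0) := by
  refine ⟨by simp [Zv, Yv], Or.inl ?_⟩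
  show ((0 : ℕ) : Fin n).val = 0
  simp

end Aux

section Walks

open SimpleGraph

variable (n : ℕ) [NeZero n]

/-- A walk along the path `x_{i+1}, …, x_{i+k+1}`. -/
def xwalk (i : ℕ) : (k : ℕ) → (i + k < n) → (SimpleGraph.fromRel (hRel2 n)).Walk (Xv n i) (Xv n (i + k))
  | 0, _ => Walk.nil
  | (k+1), h => Walk.concat (xwalk i k (by omega)) (adjXX h)

/-- A walk along the path `y_{i+1}, …, y_{i+k+1}`. -/
def ywalk (i : ℕ) : (k : ℕ) → (i + k < n) → (SimpleGraph.fromRel (hRel2 n)).Walk (Yv n i) (Yv n (i + k))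
  | 0, _ => Walk.nil
  | (k+1), h => Walk.concat (ywalk i k (by omega)) (adjYY h)

variable (x ε : ℝ)

lemma wWalk_xwalk (i : ℕ) : ∀ (k : ℕ) (h : i + k < n),
    wWalk (grW n x ε) (xwalk n i k h) = k * (x * ε)
  | 0, _ => by simp [xwalk, wWalk]
  | (k+1), h => by
    rw [xwalk, wWalk_concat, wWalk_xwalk i k (by omega)]
    have hval : grW n x ε (Xv n (i + k)) (Xv n (i + (k + 1))) = x * ε := rfl
    rw [hval]
    push_cast
    ring

lemma wWalk_ywalk (i : ℕ) : ∀ (k : ℕ) (h : i + k < n),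
    wWalk (grW n x ε) (ywalk n i k h) = k * (x * ε)
  | 0, _ => by simp [ywalk, wWalk]
  | (k+1), h => by
    rw [ywalk, wWalk_concat, wWalk_ywalk i k (by omega)]
    have hval : grW n x ε (Yv n (i + k)) (Yv n (i + (k + 1))) = x * ε := rfl
    rw [hval]
    push_cast
    ring

/-- The detour replacing the rung `(x_{i+1}, y_{i+1})`: go along the `x`-path to `x_n`,
cross the edge `(x_n, y_1)`, and go along the `y`-path to `y_{i+1}`. -/
def detour (i : ℕ) (hi : i < n) : (SimpleGraph.fromRel (hRel2 n)).Walk (Xv n i) (Yv n i) :=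
  ((xwalk n i (n - 1 - i) (by omega)).copy rfl (by rw [show i + (n - 1 - i) = n - 1 by omega])).append
    (Walk.cons adjXY ((ywalk n 0 i (by omega)).copy rfl (by rw [Nat.zero_add])))

lemma wWalk_detour (hn2 : 2 ≤ n) (i : ℕ) (hi : i < n) :
    wWalk (grW n x ε) (detour n i hi) = 1 + ε := by
  rw [detour, wWalk_append, wWalk_copy, wWalk_cons, wWalk_copy,
    wWalk_xwalk, wWalk_ywalk]
  have hge : grW n x ε (Xv n (n - 1)) (Yv n 0) = W0 n x ε := by
    show (if ((n - 1 : ℕ) : Fin n) = ((0 : ℕ) : Fin n) then 1 else W0 n x ε) = W0 n x ε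
    rw [if_neg]
    intro hEq
    have h2 := congrArg Fin.val hEq
    rw [Fin.val_cast_of_lt (by omega)] at h2
    simp at h2
    omega
  rw [hge, W0]
  have hc : ((n - 1 - i : ℕ) : ℝ) = (n : ℝ) - 1 - (i : ℝ) := by
    rw [Nat.cast_sub (by omega : i ≤ n - 1), Nat.cast_sub (by omega : 1 ≤ n)]
    push_cast
    ring
  rw [hc]
  ring

/-- The detour, with `Fin`-indexed endpoints. -/
def detourF (i : Fin n) :
    (SimpleGraph.fromRel (hRel2 n)).Walk (Sum.inr (Sum.inl i)) (Sum.inr (Sum.inr i)) :=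
  (detour n i.val i.isLt).copy (eqX rfl).symm (eqY rfl).symm

lemma wWalk_detourF (hn2 : 2 ≤ n) (i : Fin n) :
    wWalk (grW n x ε) (detourF n i) = 1 + ε := by
  rw [detourF, wWalk_copy, wWalk_detour n x ε hn2]

end Walks

section Transform

open SimpleGraph

variable {n : ℕ} [NeZero n] {x ε : ℝ}

omit [NeZero n] in
lemma classify {a b : GrV n} (hG : (grG n).Adj a b)
    (hH : ¬ (SimpleGraph.fromRel (hRel2 n)).Adj a b) :
    ∃ i : Fin n, (a = Sum.inr (Sum.inl i) ∧ b = Sum.inr (Sum.inr i)) ∨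
      (a = Sum.inr (Sum.inr i) ∧ b = Sum.inr (Sum.inl i)) := by
  obtain ⟨hne, hrel⟩ := hG
  rcases a with _ | a | a <;> rcases b with _ | b | b
  · exact absurd ⟨hne, hrel⟩ hH
  · exact absurd ⟨hne, hrel⟩ hH
  · exact absurd ⟨hne, hrel⟩ hH
  · exact absurd ⟨hne, hrel⟩ hH
  · exact absurd ⟨hne, hrel⟩ hH
  · -- a = X, b = Y
    simp only [grRel] at hrel
    rcases hrel with (rfl | hp) | hfalse
    · exact ⟨a, Or.inl ⟨rfl, rfl⟩⟩
    · exact absurd ⟨hne, Or.inl hp⟩ hH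
    · exact hfalse.elim
  · exact absurd ⟨hne, hrel⟩ hH
  · -- a = Y, b = X
    simp only [grRel] at hrel
    rcases hrel with hfalse | (rfl | hp)
    · exact hfalse.elim
    · exact ⟨b, Or.inr ⟨rfl, rfl⟩⟩
    · exact absurd ⟨hne, Or.inr hp⟩ hH
  · exact absurd ⟨hne, hrel⟩ hH

lemma transform (hε : 0 ≤ ε) (hn2 : 2 ≤ n)
    (hw : ∀ a b : GrV n, 0 ≤ grW n x ε a b) {u v : GrV n} (p : (grG n).Walk u v) :
    ∃ q : (SimpleGraph.fromRel (hRel2 n)).Walk u v,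
      wWalk (grW n x ε) q ≤ (1 + ε) * wWalk (grW n x ε) p := by
  induction p with
  | nil => exact ⟨Walk.nil, by rw [wWalk_nil, wWalk_nil]; simp⟩
  | @cons u c v h p ih =>
    obtain ⟨q', hq'⟩ := ih
    by_cases hH : (SimpleGraph.fromRel (hRel2 n)).Adj u c
    · refine ⟨Walk.cons hH q', ?_⟩
      rw [wWalk_cons, wWalk_cons]
      have h1 := mul_nonneg hε (hw u c)
      nlinarith [hq']
    · obtain ⟨i, hcase⟩ := classify h hH
      rcases hcase with ⟨rfl, rfl⟩ | ⟨rfl, rfl⟩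
      · refine ⟨(detourF n i).append q', ?_⟩
        rw [wWalk_append, wWalk_detourF n x ε hn2, wWalk_cons]
        have hwv : grW n x ε (Sum.inr (Sum.inl i)) (Sum.inr (Sum.inr i)) = 1 := by
          show (if i = i then (1:ℝ) else W0 n x ε) = 1
          rw [if_pos rfl]
        rw [hwv]
        nlinarith [hq']
      · refine ⟨(detourF n i).reverse.append q', ?_⟩
        rw [wWalk_append, wWalk_reverse (grW_symm n x ε), wWalk_detourF n x ε hn2, wWalk_cons]
        have hwv : grW n x ε (Sum.inr (Sum.inr i)) (Sum.inr (Sum.inl i)) = 1 := by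
          show (if i = i then (1:ℝ) else W0 n x ε) = 1
          rw [if_pos rfl]
        rw [hwv]
        nlinarith [hq']

lemma spanner2 (hε : 0 ≤ ε) (hn2 : 2 ≤ n)
    (hw : ∀ a b : GrV n, 0 ≤ grW n x ε a b) :
    IsSpanner (grG n) (grW n x ε) (SimpleGraph.fromRel (hRel2 n)) (1 + ε) := by
  constructor
  · intro a b hab
    obtain ⟨hne, h⟩ := hab
    refine ⟨hne, ?_⟩
    rcases a with _ | a | a <;> rcases b with _ | b | b <;>
      simp only [hRel2, grRel] at * <;> tauto
  · intro u v
    have hc : (0 : EReal) < ((1 + ε : ℝ) : EReal) := by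
      exact_mod_cast (by linarith : (0:ℝ) < 1 + ε)
    rw [← EReal.div_le_iff_le_mul hc (EReal.coe_ne_top _)]
    rw [show gdist (grG n) (grW n x ε) u v = ⨅ p : (grG n).Walk u v,
      ((wWalk (grW n x ε) p : ℝ) : EReal) from rfl]
    refine le_iInf fun p => ?_
    rw [EReal.div_le_iff_le_mul hc (EReal.coe_ne_top _)]
    obtain ⟨q, hq⟩ := transform hε hn2 hw p
    calc gdist (SimpleGraph.fromRel (hRel2 n)) (grW n x ε) u v
        ≤ ((wWalk (grW n x ε) q : ℝ) : EReal) := iInf_le _ q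
      _ ≤ (((1 + ε) * wWalk (grW n x ε) p : ℝ) : EReal) := by exact_mod_cast hq
      _ = ((1 + ε : ℝ) : EReal) * ((wWalk (grW n x ε) p : ℝ) : EReal) := EReal.coe_mul _ _

end Transform

section EdgeSet

open SimpleGraph Finset

variable (n : ℕ) [NeZero n]

/-- The edges of the subgraph `H`, as a finite set. -/
def hEdges : Finset (Sym2 (GrV n)) :=
  ((Finset.range (n - 1)).image fun i => s(Xv n i, Xv n (i + 1))) ∪
  ((Finset.range (n - 1)).image fun i => s(Yv n i, Yv n (i + 1))) ∪
  {s(Zv n, Xv n (n - 1)), s(Zv n, Yv n 0), s(Xv n (n - 1), Yv n 0)}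

variable {n}

lemma memXX {i : ℕ} (h : i + 1 < n) : s(Xv n i, Xv n (i + 1)) ∈ hEdges n := by
  simp only [hEdges, Finset.mem_union]
  exact Or.inl (Or.inl (Finset.mem_image.2 ⟨i, Finset.mem_range.2 (by omega), rfl⟩))

lemma memYY {i : ℕ} (h : i + 1 < n) : s(Yv n i, Yv n (i + 1)) ∈ hEdges n := by
  simp only [hEdges, Finset.mem_union]
  exact Or.inl (Or.inr (Finset.mem_image.2 ⟨i, Finset.mem_range.2 (by omega), rfl⟩))

lemma memZX : s(Zv n, Xv n (n - 1)) ∈ hEdges n := by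
  simp [hEdges]

lemma memZY : s(Zv n, Yv n 0) ∈ hEdges n := by
  simp [hEdges]

lemma memXY : s(Xv n (n - 1), Yv n 0) ∈ hEdges n := by
  simp [hEdges]

lemma edgeSet_eq : (SimpleGraph.fromRel (hRel2 n)).edgeSet = ↑(hEdges n) := by
  ext e
  induction e using Sym2.ind with
  | _ a b =>
    rw [SimpleGraph.mem_edgeSet, Finset.mem_coe]
    constructor
    · rintro ⟨hne, h⟩
      rcases a with _ | a | a <;> rcases b with _ | b | b <;>
          simp only [hRel2] at h
      · exact absurd rfl hne
      · -- z, X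
        rcases h with h | h
        · rw [eqX h]; exact memZX
        · exact h.elim
      · -- z, Y
        rcases h with h | h
        · rw [eqY h]; exact memZY
        · exact h.elim
      · -- X, z
        rcases h with h | h
        · exact h.elim
        · rw [Sym2.eq_swap, eqX h]; exact memZX
      · -- X, X
        rcases h with h | h
        · rw [eqX (rfl : a.val = a.val), eqX h]; exact memXX (h ▸ b.isLt)
        · rw [Sym2.eq_swap, eqX (rfl : b.val = b.val), eqX h]; exact memXX (h ▸ a.isLt)
      · -- X, Y
        rcases h with ⟨h1, h2⟩ | h
        · rw [eqX h1, eqY h2]; exact memXY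
        · exact h.elim
      · -- Y, z
        rcases h with h | h
        · exact h.elim
        · rw [Sym2.eq_swap, eqY h]; exact memZY
      · -- Y, X
        rcases h with h | ⟨h1, h2⟩
        · exact h.elim
        · rw [Sym2.eq_swap, eqX h1, eqY h2]; exact memXY
      · -- Y, Y
        rcases h with h | h
        · rw [eqY (rfl : a.val = a.val), eqY h]; exact memYY (h ▸ b.isLt)
        · rw [Sym2.eq_swap, eqY (rfl : b.val = b.val), eqY h]; exact memYY (h ▸ a.isLt)
    · intro hmem
      simp only [hEdges, Finset.mem_union, Finset.mem_image, Finset.mem_insert,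
        Finset.mem_singleton, Finset.mem_range] at hmem
      rcases hmem with ((⟨i, hi, he⟩ | ⟨i, hi, he⟩) | he | he | he) <;>
        rw [Sym2.eq_iff] at he <;>
        rcases he with ⟨rfl, rfl⟩ | ⟨rfl, rfl⟩
      · exact adjXX (by omega)
      · exact (adjXX (by omega)).symm
      · exact adjYY (by omega)
      · exact (adjYY (by omega)).symm
      · exact adjZX
      · exact adjZX.symm
      · exact adjZY
      · exact adjZY.symm
      · exact adjXY
      · exact adjXY.symm

end EdgeSet

section WeightSum

open SimpleGraph Finset

variable {n : ℕ} [NeZero n]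

lemma grW_XnY0 (hn2 : 2 ≤ n) (x ε : ℝ) :
    grW n x ε (Xv n (n - 1)) (Yv n 0) = W0 n x ε := by
  show (if ((n - 1 : ℕ) : Fin n) = ((0 : ℕ) : Fin n) then 1 else W0 n x ε) = W0 n x ε
  rw [if_neg]
  intro hEq
  have h2 := congrArg Fin.val hEq
  rw [Fin.val_cast_of_lt (by omega)] at h2
  simp at h2
  omega

lemma wGraph_eq (hn2 : 2 ≤ n) (x ε : ℝ) :
    wGraph (SimpleGraph.fromRel (hRel2 n)) (grW n x ε) (grW_symm n x ε) =
      ((n : ℝ) - 1) * (x * ε) * 2 + (1 + x * ε) * W0 n x ε + W0 n x ε := by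
  have hd1 : Disjoint ((range (n - 1)).image fun i => s(Xv n i, Xv n (i + 1)))
      ((range (n - 1)).image fun i => s(Yv n i, Yv n (i + 1))) := by
    rw [Finset.disjoint_left]
    rintro e he1 he2
    obtain ⟨i, -, rfl⟩ := Finset.mem_image.1 he1
    obtain ⟨j, -, hj⟩ := Finset.mem_image.1 he2
    rw [Sym2.eq_iff] at hj
    simp [Xv, Yv] at hj
  have hd2 : Disjoint (((range (n - 1)).image fun i => s(Xv n i, Xv n (i + 1))) ∪
      ((range (n - 1)).image fun i => s(Yv n i, Yv n (i + 1))))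
      ({s(Zv n, Xv n (n - 1)), s(Zv n, Yv n 0), s(Xv n (n - 1), Yv n 0)} :
        Finset (Sym2 (GrV n))) := by
    rw [Finset.disjoint_left]
    rintro e he1 he2
    simp only [Finset.mem_union, Finset.mem_image, Finset.mem_range] at he1
    simp only [Finset.mem_insert, Finset.mem_singleton] at he2
    rcases he1 with ⟨i, -, rfl⟩ | ⟨i, -, rfl⟩ <;>
      rcases he2 with he | he | he <;>
      rw [Sym2.eq_iff] at he <;>
      simp [Xv, Yv, Zv] at he
  have hinjX : ∀ i ∈ range (n - 1), ∀ j ∈ range (n - 1),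
      s(Xv n i, Xv n (i + 1)) = s(Xv n j, Xv n (j + 1)) → i = j := by
    intro i hi j hj h
    rw [Finset.mem_range] at hi hj
    rw [Sym2.eq_iff] at h
    rcases h with ⟨h1, -⟩ | ⟨h1, h2⟩
    · exact Xv_inj (by omega) (by omega) h1
    · have := Xv_inj (by omega) (by omega) h1
      have := Xv_inj (by omega) (by omega) h2
      omega
  have hinjY : ∀ i ∈ range (n - 1), ∀ j ∈ range (n - 1),
      s(Yv n i, Yv n (i + 1)) = s(Yv n j, Yv n (j + 1)) → i = j := by
    intro i hi j hj h
    rw [Finset.mem_range] at hi hj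
    rw [Sym2.eq_iff] at h
    rcases h with ⟨h1, -⟩ | ⟨h1, h2⟩
    · exact Yv_inj (by omega) (by omega) h1
    · have := Yv_inj (by omega) (by omega) h1
      have := Yv_inj (by omega) (by omega) h2
      omega
  have hne1 : s(Zv n, Xv n (n - 1)) ∉
      ({s(Zv n, Yv n 0), s(Xv n (n - 1), Yv n 0)} : Finset (Sym2 (GrV n))) := by
    simp only [Finset.mem_insert, Finset.mem_singleton]
    rintro (he | he) <;> rw [Sym2.eq_iff] at he <;> simp [Xv, Yv, Zv] at he
  have hne2 : s(Zv n, Yv n 0) ∉ ({s(Xv n (n - 1), Yv n 0)} : Finset (Sym2 (GrV n))) := by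
    simp only [Finset.mem_singleton]
    intro he
    rw [Sym2.eq_iff] at he
    simp [Xv, Yv, Zv] at he
  rw [wGraph, edgeSet_eq, finsum_mem_coe_finset, hEdges,
    Finset.sum_union hd2, Finset.sum_union hd1,
    Finset.sum_image hinjX, Finset.sum_image hinjY,
    Finset.sum_insert hne1, Finset.sum_insert hne2, Finset.sum_singleton]
  have hX : ∀ i : ℕ, Sym2.lift ⟨grW n x ε, grW_symm n x ε⟩ s(Xv n i, Xv n (i + 1)) = x * ε :=
    fun i => by rw [Sym2.lift_mk]; rfl
  have hY : ∀ i : ℕ, Sym2.lift ⟨grW n x ε, grW_symm n x ε⟩ s(Yv n i, Yv n (i + 1)) = x * ε :=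
    fun i => by rw [Sym2.lift_mk]; rfl
  have hZ1 : Sym2.lift ⟨grW n x ε, grW_symm n x ε⟩ s(Zv n, Xv n (n - 1)) =
      (1 + x * ε) * W0 n x ε / 2 := by rw [Sym2.lift_mk]; rfl
  have hZ2 : Sym2.lift ⟨grW n x ε, grW_symm n x ε⟩ s(Zv n, Yv n 0) =
      (1 + x * ε) * W0 n x ε / 2 := by rw [Sym2.lift_mk]; rfl
  have hW : Sym2.lift ⟨grW n x ε, grW_symm n x ε⟩ s(Xv n (n - 1), Yv n 0) = W0 n x ε := by
    rw [Sym2.lift_mk]; exact grW_XnY0 hn2 x ε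
  rw [Finset.sum_congr rfl fun i _ => hX i, Finset.sum_congr rfl fun i _ => hY i,
    hZ1, hZ2, hW, Finset.sum_const, Finset.card_range, nsmul_eq_mul]
  have hcast : ((n - 1 : ℕ) : ℝ) = (n : ℝ) - 1 := by
    rw [Nat.cast_sub (by omega : 1 ≤ n), Nat.cast_one]
  rw [hcast]
  ring

end WeightSum

/-- the union of the path `π` and the edge `(x_n, y_1)` is a `(1+ε)`-spanner
of `G(x,ε)` of total weight less than `4`; consequently, there is a `(1+ε)`-spanner of
`G(x,ε)` of total weight less than `4`. -/
theorem statement2 (x ε : ℝ) (hε0 : 0 < ε) (hε1 : ε < 1/4)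
    (hx1 : 1 ≤ x) (hx2 : x ≤ (1/2) * Real.sqrt (1/ε))
    (n : ℕ) (hn : (n : ℤ) = 1 + ⌈1/x + 1/(2 * x^2 * ε)⌉) :
    IsSpanner (grG n) (grW n x ε) (SimpleGraph.fromRel (hRel2 n)) (1 + ε) ∧
    wGraph (SimpleGraph.fromRel (hRel2 n)) (grW n x ε) (grW_symm n x ε) < 4 ∧
    ∃ H : SimpleGraph (GrV n), IsSpanner (grG n) (grW n x ε) H (1 + ε) ∧
      wGraph H (grW n x ε) (grW_symm n x ε) < 4 := by
  have hx0 : (0:ℝ) < x := lt_of_lt_of_le one_pos hx1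
  have hxe0 : (0:ℝ) ≤ x * ε := by positivity
  have hie : (0:ℝ) ≤ 1/ε := by positivity
  have hs2 : Real.sqrt (1/ε) ^ 2 = 1/ε := Real.sq_sqrt hie
  have hie2 : (1/ε) * ε = 1 := by field_simp
  have hxsq : x^2 ≤ (1/4) * (1/ε) := by
    have h := mul_self_le_mul_self hx0.le hx2
    calc x^2 = x * x := sq x
      _ ≤ (1/2 * Real.sqrt (1/ε)) * (1/2 * Real.sqrt (1/ε)) := h
      _ = (1/4) * (Real.sqrt (1/ε) ^ 2) := by ring
      _ = (1/4) * (1/ε) := by rw [hs2]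
  have hsq : x^2 * ε ≤ 1/4 := by
    have h := mul_le_mul_of_nonneg_right hxsq hε0.le
    rw [mul_assoc, hie2, mul_one] at h
    exact h
  have hxε : x * ε < 1/4 := by nlinarith [hsq, hx1, hε0, hε1]
  -- facts about n
  have hr0 : (0:ℝ) < 1/x + 1/(2 * x^2 * ε) := by positivity
  have hceil : (0:ℤ) < ⌈1/x + 1/(2 * x^2 * ε)⌉ := Int.ceil_pos.2 hr0
  set c : ℤ := ⌈1/x + 1/(2 * x^2 * ε)⌉ with hc
  have hn2 : 2 ≤ n := by omega
  haveI : NeZero n := ⟨by omega⟩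
  have hnR : ((n:ℝ) - 1) = (c : ℝ) := by
    have := congrArg (Int.cast : ℤ → ℝ) hn
    push_cast at this
    linarith
  have hA1 : 1/x + 1/(2 * x^2 * ε) ≤ (n:ℝ) - 1 := by
    rw [hnR, hc]; exact Int.le_ceil _
  have hA2 : (n:ℝ) - 1 < 1/x + 1/(2 * x^2 * ε) + 1 := by
    rw [hnR, hc]; exact Int.ceil_lt_add_one _
  have e1 : (1/x + 1/(2 * x^2 * ε)) * (x * ε) = ε + 1/(2*x) := by
    field_simp
  have e2 : (1/x + 1/(2 * x^2 * ε) + 1) * (x * ε) = ε + 1/(2*x) + x * ε := by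
    field_simp
  have hxe00 : (0:ℝ) < x * ε := by positivity
  have hA_lb : ε + 1/(2*x) ≤ ((n:ℝ) - 1) * (x * ε) := by
    have h := mul_le_mul_of_nonneg_right hA1 hxe0
    rwa [e1] at h
  have hA_ub : ((n:ℝ) - 1) * (x * ε) ≤ ε + 1/(2*x) + x * ε := by
    have h := mul_le_mul_of_nonneg_right hA2.le hxe0
    rwa [e2] at h
  have hinvx0 : (0:ℝ) < 1/(2*x) := by positivity
  have hinvx : 1/(2*x) ≤ 1/2 := by
    rw [div_le_div_iff₀ (by positivity) (by norm_num)]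
    linarith
  have hW0pos : 0 < W0 n x ε := by
    rw [W0]; linarith [hA_ub, hinvx, hxε]
  have hW0ub : W0 n x ε ≤ 1 - 1/(2*x) := by
    rw [W0]; linarith [hA_lb]
  -- nonnegativity of the weights
  have h2 : (0:ℝ) ≤ (1 + x*ε) * W0 n x ε / 2 := by positivity
  have h0 : ∀ (i j : Fin n), (0:ℝ) ≤ if i = j then 1 else W0 n x ε := by
    intro i j
    split_ifs
    · norm_num
    · linarith
  have hwnn : ∀ a b : GrV n, 0 ≤ grW n x ε a b := by
    rintro (⟨⟩|a|a) (⟨⟩|b|b)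
    · exact h2
    · exact h2
    · exact h2
    · exact h2
    · exact hxe0
    · exact h0 a b
    · exact h2
    · exact h0 b a
    · exact hxe0
  have hspan : IsSpanner (grG n) (grW n x ε) (SimpleGraph.fromRel (hRel2 n)) (1 + ε) :=
    spanner2 hε0.le hn2 hwnn
  have hweight : wGraph (SimpleGraph.fromRel (hRel2 n)) (grW n x ε) (grW_symm n x ε) < 4 := by
    rw [wGraph_eq hn2 x ε]
    have hprod : (1 + x*ε) * W0 n x ε ≤ (1 + x*ε) * (1 - 1/(2*x)) :=
      mul_le_mul_of_nonneg_left hW0ub (by positivity)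
    have hprod2 : (1 + x*ε) * W0 n x ε ≤ 1 - 1/(2*x) + x*ε := by
      nlinarith [hprod, mul_nonneg hxe0 hinvx0.le]
    linarith [hA_ub, hprod2, hW0ub, hε1, hxε]
  exact ⟨hspan, hweight, ⟨SimpleGraph.fromRel (hRel2 n), hspan, hweight⟩⟩

end Paper
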